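/- arXiv:math/0403081 — 2 statements merged into one kernel-verified Lean document; each statement's English description precedes it below -/
import Mathlib

section
/- In any recollement situation, the intermediate extension functor j_!* := Im(N: j_! → j_*) satisfies i* ∘ j_!* = 0 and i^! ∘ j_!* = 0. -/
open CategoryTheory Limits

universe v u v' u' v'' u''

/-- A recollement situation of abelian categories `A'`, `A`, `A''`. -/
structure Recollement (A' : Type u') (A : Type u) (A'' : Type u'')
    [Category.{v'} A'] [Category.{v} A] [Category.{v''} A'']
    [Abelian A'] [Abelian A] [Abelian A''] where
  /-- the functor `i^* : A → A'` -/
  iStar : A ⥤ A'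
  /-- the functor `i_* : A' → A` -/
  iLower : A' ⥤ A
  /-- the functor `i^! : A → A'` -/
  iShriek : A ⥤ A'
  /-- the functor `j_! : A'' → A` -/
  jShriek : A'' ⥤ A
  /-- the functor `j^* : A → A''` -/
  jStar : A ⥤ A''
  /-- the functor `j_* : A'' → A` -/
  jLower : A'' ⥤ A
  iStar_additive : iStar.Additive
  iLower_additive : iLower.Additive
  iShriek_additive : iShriek.Additive
  jShriek_additive : jShriek.Additive
  jStar_additive : jStar.Additive
  jLower_additive : jLower.Additive
  /-- `j_!` is left adjoint to `j^*` -/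
  adj₁ : jShriek ⊣ jStar
  /-- `j^*` is left adjoint to `j_*` -/
  adj₂ : jStar ⊣ jLower
  /-- `i^*` is left adjoint to `i_*` -/
  adj₃ : iStar ⊣ iLower
  /-- `i_*` is left adjoint to `i^!` -/
  adj₄ : iLower ⊣ iShriek
  /-- the unit `Id → j^* j_!` is an isomorphism -/
  isIso_adj₁_unit : IsIso adj₁.unit
  /-- the counit `j^* j_* → Id` is an isomorphism -/
  isIso_adj₂_counit : IsIso adj₂.counit
  /-- the counit `i^* i_* → Id` is an isomorphism -/
  isIso_adj₃_counit : IsIso adj₃.counit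
  /-- the unit `Id → i^! i_*` is an isomorphism -/
  isIso_adj₄_unit : IsIso adj₄.unit
  iLower_full : iLower.Full
  iLower_faithful : iLower.Faithful
  /-- `i_*` is an embedding onto the full subcategory of objects killed by `j^*` -/
  essImage_iLower : ∀ (X : A), iLower.essImage X ↔ IsZero (jStar.obj X)

attribute [instance] Recollement.iStar_additive Recollement.iLower_additive
  Recollement.iShriek_additive Recollement.jShriek_additive Recollement.jStar_additive
  Recollement.jLower_additive Recollement.isIso_adj₁_unit Recollement.isIso_adj₂_counit
  Recollement.isIso_adj₃_counit Recollement.isIso_adj₄_unit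
  Recollement.iLower_full Recollement.iLower_faithful

variable {A' : Type u'} {A : Type u} {A'' : Type u''}
    [Category.{v'} A'] [Category.{v} A] [Category.{v''} A'']
    [Abelian A'] [Abelian A] [Abelian A'']

namespace Recollement

/-- The norm `N : j_! ⟶ j_*`, whose component at `X` corresponds to the identity of `X`
under `Hom(j_!X, j_*X) ≅ Hom(X, j^*j_*X) ≅ Hom(X, X)`. -/
noncomputable def norm (R : Recollement A' A A'') : R.jShriek ⟶ R.jLower where
  app X := (R.adj₁.homEquiv X (R.jLower.obj X)).symm (inv (R.adj₂.counit.app X))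
  naturality {X Y} f := by
    try dsimp only
    have h : f ≫ inv (R.adj₂.counit.app Y) =
        inv (R.adj₂.counit.app X) ≫ R.jStar.map (R.jLower.map f) := by
      rw [← cancel_mono (R.adj₂.counit.app Y)]
      have := R.adj₂.counit.naturality f
      simp only [Functor.comp_map, Functor.id_map] at this
      simp [this]
    rw [← Adjunction.homEquiv_naturality_left_symm, h,
      Adjunction.homEquiv_naturality_right_symm]

/-- The intermediate extension `j_!* := Im (N : j_! → j_*)`. -/
noncomputable def jMid (R : Recollement A' A A'') : A'' ⥤ A where
  obj X := image (R.norm.app X)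
  map {X Y} f := image.map
    ((Arrow.homMk _ _ (R.norm.naturality f) :
      Arrow.mk (R.norm.app X) ⟶ Arrow.mk (R.norm.app Y)))
  map_id X := by
    try dsimp only
    have : (Arrow.homMk _ _ (R.norm.naturality (𝟙 X)) :
        Arrow.mk (R.norm.app X) ⟶ Arrow.mk (R.norm.app X)) = 𝟙 (Arrow.mk (R.norm.app X)) := by
      ext <;> simp
    rw [this, image.map_id]
    rfl
  map_comp {X Y Z} f g := by
    try dsimp only
    rw [← image.map_comp]
    congr 1
    ext <;> simp

end Recollement

namespace Recollement

lemma jStar_iLower_isZero (R : Recollement A' A A'') (Y : A') :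
    IsZero (R.jStar.obj (R.iLower.obj Y)) :=
  (R.essImage_iLower (R.iLower.obj Y)).1 ⟨Y, ⟨Iso.refl _⟩⟩

lemma iStar_jShriek_isZero (R : Recollement A' A A'') (X : A'') :
    IsZero (R.iStar.obj (R.jShriek.obj X)) := by
  rw [IsZero.iff_id_eq_zero]
  have hg : (R.adj₃.homEquiv _ _) (𝟙 (R.iStar.obj (R.jShriek.obj X))) = 0 := by
    apply (R.adj₁.homEquiv X _).injective
    exact (R.jStar_iLower_isZero _).eq_of_tgt _ _
  have h := (R.adj₃.homEquiv (R.jShriek.obj X) _).symm_apply_apply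
    (𝟙 (R.iStar.obj (R.jShriek.obj X)))
  rw [hg, Adjunction.homEquiv_counit, Functor.map_zero, zero_comp] at h
  exact h.symm

lemma iShriek_jLower_isZero (R : Recollement A' A A'') (X : A'') :
    IsZero (R.iShriek.obj (R.jLower.obj X)) := by
  rw [IsZero.iff_id_eq_zero]
  have hg : (R.adj₄.homEquiv _ _).symm (𝟙 (R.iShriek.obj (R.jLower.obj X))) = 0 := by
    apply (R.adj₂.homEquiv _ X).symm.injective
    exact (R.jStar_iLower_isZero _).eq_of_src _ _
  have h := (R.adj₄.homEquiv _ (R.jLower.obj X)).apply_symm_apply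
    (𝟙 (R.iShriek.obj (R.jLower.obj X)))
  rw [hg, Adjunction.homEquiv_unit, Functor.map_zero, comp_zero] at h
  exact h.symm

end Recollement

/-- The intermediate extension `j_!* = Im (N : j_! → j_*)` satisfies
`i^* ∘ j_!* = 0` and `i^! ∘ j_!* = 0`. -/
theorem recollement_iStar_jMid_isZero_and_iShriek_jMid_isZero
    (R : Recollement A' A A'') (X : A'') :
    IsZero (R.iStar.obj (R.jMid.obj X)) ∧ IsZero (R.iShriek.obj (R.jMid.obj X)) := by
  constructor
  · haveI : (R.iStar).PreservesEpimorphisms :=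
      Functor.preservesEpimorphisms_of_adjunction R.adj₃
    have h0 : R.iStar.map (factorThruImage (R.norm.app X)) = 0 :=
      (R.iStar_jShriek_isZero X).eq_of_src _ _
    rw [IsZero.iff_id_eq_zero]
    change 𝟙 (R.iStar.obj (image (R.norm.app X))) = 0
    rw [← cancel_epi (R.iStar.map (factorThruImage (R.norm.app X))), h0]
    simp
  · haveI : (R.iShriek).PreservesMonomorphisms :=
      Functor.preservesMonomorphisms_of_adjunction R.adj₄
    have h0 : R.iShriek.map (image.ι (R.norm.app X)) = 0 :=
      (R.iShriek_jLower_isZero X).eq_of_tgt _ _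
    rw [IsZero.iff_id_eq_zero]
    change 𝟙 (R.iShriek.obj (image (R.norm.app X))) = 0
    rw [← cancel_mono (R.iShriek.map (image.ι (R.norm.app X))), h0]
    simp
end

section
/- In a recollement situation, let A, B be objects of A with i*A = 0, i^!B = 0, j*A ≠ 0, j*B ≠ 0. Then the map Ext¹_A(A, B) → Ext¹_{A''}(j*A, j*B) induced by the exact functor j* is a monomorphism. -/
open CategoryTheory Limits

universe v u v' u' v'' u''

variable {A' : Type u'} {A : Type u} {A'' : Type u''}
    [Category.{v'} A'] [Category.{v} A] [Category.{v''} A'']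
    [Abelian A'] [Abelian A] [Abelian A'']

namespace RecollementAux

open CategoryTheory.Limits CategoryTheory.Category

variable (R : Recollement A' A A'')

/-- Any morphism from an object killed by `j^*` to an object killed by `i^!` vanishes. -/
lemma hom_eq_zero_left {M N : A} (hM : IsZero (R.jStar.obj M))
    (hN : IsZero (R.iShriek.obj N)) (f : M ⟶ N) : f = 0 := by
  obtain ⟨W, ⟨e⟩⟩ := (R.essImage_iLower M).2 hM
  have h0 : R.adj₄.homEquiv W N (e.hom ≫ f) = 0 := hN.eq_of_tgt _ _
  have h1 : e.hom ≫ f = 0 := by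
    have h2 := congrArg (R.adj₄.homEquiv W N).symm h0
    rw [Equiv.symm_apply_apply] at h2
    rw [h2, Adjunction.homEquiv_counit, Functor.map_zero, zero_comp]
  calc f = e.inv ≫ (e.hom ≫ f) := by rw [e.inv_hom_id_assoc]
  _ = 0 := by rw [h1, comp_zero]

/-- Any morphism from an object killed by `i^*` to an object killed by `j^*` vanishes. -/
lemma hom_eq_zero_right {M N : A} (hM : IsZero (R.iStar.obj M))
    (hN : IsZero (R.jStar.obj N)) (f : M ⟶ N) : f = 0 := by
  obtain ⟨W, ⟨e⟩⟩ := (R.essImage_iLower N).2 hN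
  have h0 : (R.adj₃.homEquiv M W).symm (f ≫ e.inv) = 0 := hM.eq_of_src _ _
  have h1 : f ≫ e.inv = 0 := by
    have h2 := congrArg (R.adj₃.homEquiv M W) h0
    rw [Equiv.apply_symm_apply] at h2
    rw [h2, Adjunction.homEquiv_unit, Functor.map_zero, comp_zero]
  calc f = (f ≫ e.inv) ≫ e.hom := by rw [assoc, e.inv_hom_id, Category.comp_id]
  _ = 0 := by rw [h1, zero_comp]

/-- `j^*` of each counit component of `j_! ⊣ j^*` is an isomorphism. -/
lemma isIso_jStar_map_counit (Y : A) : IsIso (R.jStar.map (R.adj₁.counit.app Y)) := by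
  have h := R.adj₁.right_triangle_components Y
  haveI : IsIso (R.adj₁.unit.app (R.jStar.obj Y)) := inferInstance
  have : IsIso (R.adj₁.unit.app (R.jStar.obj Y) ≫ R.jStar.map (R.adj₁.counit.app Y)) := by
    rw [h]
    exact IsIso.id _
  exact IsIso.of_isIso_comp_left (R.adj₁.unit.app (R.jStar.obj Y)) _

lemma isZero_jStar_kernel_counit (Y : A) :
    IsZero (R.jStar.obj (kernel (R.adj₁.counit.app Y))) := by
  haveI : R.jStar.PreservesMonomorphisms :=
    Functor.preservesMonomorphisms_of_adjunction R.adj₁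
  haveI := isIso_jStar_map_counit R Y
  have h0 : R.jStar.map (kernel.ι (R.adj₁.counit.app Y)) = 0 := by
    have h1 : R.jStar.map (kernel.ι (R.adj₁.counit.app Y)) ≫
        R.jStar.map (R.adj₁.counit.app Y) = 0 := by
      rw [← Functor.map_comp, kernel.condition, Functor.map_zero]
    exact (cancel_mono (R.jStar.map (R.adj₁.counit.app Y))).1 (by rw [h1, zero_comp])
  rw [IsZero.iff_id_eq_zero]
  rw [← cancel_mono (R.jStar.map (kernel.ι (R.adj₁.counit.app Y))), Category.id_comp, h0, zero_comp]

lemma isZero_jStar_cokernel_counit (Y : A) :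
    IsZero (R.jStar.obj (cokernel (R.adj₁.counit.app Y))) := by
  haveI : R.jStar.PreservesEpimorphisms :=
    Functor.preservesEpimorphisms_of_adjunction R.adj₂
  haveI := isIso_jStar_map_counit R Y
  have h0 : R.jStar.map (cokernel.π (R.adj₁.counit.app Y)) = 0 := by
    have h1 : R.jStar.map (R.adj₁.counit.app Y) ≫
        R.jStar.map (cokernel.π (R.adj₁.counit.app Y)) = 0 := by
      rw [← Functor.map_comp, cokernel.condition, Functor.map_zero]
    exact (cancel_epi (R.jStar.map (R.adj₁.counit.app Y))).1 (by rw [h1, comp_zero])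
  rw [IsZero.iff_id_eq_zero]
  rw [← cancel_epi (R.jStar.map (cokernel.π (R.adj₁.counit.app Y))), Category.comp_id, h0, comp_zero]

/-- If `i^* Y = 0` then the counit `j_! j^* Y ⟶ Y` is an epimorphism. -/
lemma epi_counit_app {Y : A} (hY : IsZero (R.iStar.obj Y)) :
    Epi (R.adj₁.counit.app Y) := by
  apply CategoryTheory.Abelian.epi_of_cokernel_π_eq_zero
  exact hom_eq_zero_right R hY (isZero_jStar_cokernel_counit R Y) _

end RecollementAux

open RecollementAux

/-- If `i^*A = 0`, `i^!B = 0`, `j^*A ≠ 0` and `j^*B ≠ 0`, then `j^*` is injective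
on `Ext¹`: two extensions of `A` by `B` whose images under the exact functor `j^*`
are equivalent are already equivalent. -/
theorem recollement_jStar_ext_one_mono (R : Recollement A' A A'')
    (X B : A) (hX : IsZero (R.iStar.obj X)) (hB : IsZero (R.iShriek.obj B))
    (hX' : ¬ IsZero (R.jStar.obj X)) (hB' : ¬ IsZero (R.jStar.obj B))
    (E E' : A) (i : B ⟶ E) (p : E ⟶ X) (i' : B ⟶ E') (p' : E' ⟶ X)
    (w : i ≫ p = 0) (w' : i' ≫ p' = 0)
    (hE : (ShortComplex.mk i p w).ShortExact)
    (hE' : (ShortComplex.mk i' p' w').ShortExact)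
    (ψ : R.jStar.obj E ≅ R.jStar.obj E')
    (hψ₁ : R.jStar.map i ≫ ψ.hom = R.jStar.map i')
    (hψ₂ : ψ.hom ≫ R.jStar.map p' = R.jStar.map p) :
    ∃ φ : E ≅ E', i ≫ φ.hom = i' ∧ φ.hom ≫ p' = p := by
  classical
  haveI hBmono : Mono i := hE.mono_f
  haveI hXepi : Epi p := hE.epi_g
  haveI hB'mono : Mono i' := hE'.mono_f
  haveI hX'epi : Epi p' := hE'.epi_g
  letI : PreservesLimitsOfSize.{0, 0} R.jStar := R.adj₁.rightAdjoint_preservesLimits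
  letI : PreservesColimitsOfSize.{0, 0} R.jStar := R.adj₂.leftAdjoint_preservesColimits
  haveI : PreservesFiniteLimits R.jStar := PreservesLimitsOfSize.preservesFiniteLimits _
  haveI : PreservesFiniteColimits R.jStar := PreservesColimitsOfSize.preservesFiniteColimits _
  -- the pullback `P = E' ×_X E`
  let P : A := pullback p' p
  let π' : P ⟶ E' := pullback.fst p' p
  let π : P ⟶ E := pullback.snd p' p
  have hcond : π' ≫ p' = π ≫ p := pullback.condition
  haveI : Epi π := CategoryTheory.Abelian.epi_pullback_of_epi_f p' p
  let m : B ⟶ P := pullback.lift i' i (by rw [w', w])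
  let k : B ⟶ P := pullback.lift i' 0 (by rw [w', zero_comp])
  have hmπ' : m ≫ π' = i' := pullback.lift_fst _ _ _
  have hmπ : m ≫ π = i := pullback.lift_snd _ _ _
  have hkπ' : k ≫ π' = i' := pullback.lift_fst _ _ _
  have hkπ : k ≫ π = 0 := pullback.lift_snd _ _ _
  haveI : Mono m := mono_of_mono_fac hmπ'
  haveI : Mono k := mono_of_mono_fac hkπ'
  -- `k` is a kernel of `π`
  have hkker : IsLimit (KernelFork.ofι k hkπ) := by
    refine KernelFork.IsLimit.ofι' k hkπ (fun {T} g hg => ?_)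
    have hgp : (g ≫ π') ≫ p' = 0 := by
      rw [Category.assoc, hcond, ← Category.assoc, hg, zero_comp]
    refine ⟨hE'.exact.lift (g ≫ π') hgp, ?_⟩
    apply pullback.hom_ext
    · rw [Category.assoc]
      rw [show pullback.fst p' p = π' from rfl, hkπ']
      exact hE'.exact.lift_f _ _
    · rw [Category.assoc, show pullback.snd p' p = π from rfl, hkπ, comp_zero, hg]
  have hSPexact : (ShortComplex.mk k π hkπ).Exact :=
    ShortComplex.exact_of_f_is_kernel _ hkker
  have hSP : (ShortComplex.mk k π hkπ).ShortExact :=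
    ShortComplex.ShortExact.mk' hSPexact inferInstance inferInstance
  -- the Baer difference `Q`
  let Q : A := cokernel m
  let q : P ⟶ Q := cokernel.π m
  have hmq : m ≫ q = 0 := cokernel.condition m
  let t' : Q ⟶ X := cokernel.desc m (π ≫ p) (by rw [← Category.assoc, hmπ, w])
  have hqt' : q ≫ t' = π ≫ p := cokernel.π_desc _ _ _
  let n : B ⟶ Q := k ≫ q
  have hnq : n = k ≫ q := rfl
  have hnt' : n ≫ t' = 0 := by
    rw [hnq, Category.assoc, hqt', ← Category.assoc, hkπ, zero_comp]
  haveI : Epi t' := by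
    haveI h1 : Epi (π ≫ p) := epi_comp _ _
    exact epi_of_epi_fac hqt'
  have hMQexact : (ShortComplex.mk m q hmq).Exact := CategoryTheory.ShortComplex.exact_cokernel m
  haveI : Mono n := by
    rw [Preadditive.mono_iff_cancel_zero]
    intro T a ha
    have h1 : (a ≫ k) ≫ q = 0 := by rw [Category.assoc, ← hnq]; exact ha
    have hc : hMQexact.lift (a ≫ k) h1 ≫ m = a ≫ k := hMQexact.lift_f _ _
    have h2 : hMQexact.lift (a ≫ k) h1 ≫ i = 0 := by
      rw [← hmπ, ← Category.assoc, hc, Category.assoc, hkπ, comp_zero]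
    have h3 : hMQexact.lift (a ≫ k) h1 = 0 := zero_of_comp_mono i h2
    have h4 : a ≫ k = 0 := by rw [← hc, h3, zero_comp]
    exact zero_of_comp_mono k h4
  -- exactness of `0 ⟶ B ⟶ Q ⟶ X ⟶ 0`
  have hSQexact : (ShortComplex.mk n t' hnt').Exact := by
    rw [ShortComplex.exact_iff_exact_up_to_refinements]
    intro T x₂ hx₂
    obtain ⟨T₁, π₁, hπ₁, y, hy⟩ := surjective_up_to_refinements_of_epi q x₂
    have h1 : (y ≫ π) ≫ p = 0 := by
      rw [Category.assoc, ← hqt', ← Category.assoc, ← hy, Category.assoc, hx₂, comp_zero]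
    obtain ⟨T₂, π₂, hπ₂, b, hb⟩ := hE.exact.exact_up_to_refinements (y ≫ π) h1
    dsimp at hb
    let z : T₂ ⟶ P := π₂ ≫ y - b ≫ m
    have hzπ : z ≫ π = 0 := by
      show (π₂ ≫ y - b ≫ m) ≫ π = 0
      rw [Preadditive.sub_comp, Category.assoc, Category.assoc, hmπ, ← Category.assoc, ← hb,
        Category.assoc, sub_self]
    have hck : hSPexact.lift z hzπ ≫ k = z := hSPexact.lift_f _ _
    refine ⟨T₂, π₂ ≫ π₁, epi_comp _ _, hSPexact.lift z hzπ, ?_⟩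
    show (π₂ ≫ π₁) ≫ x₂ = hSPexact.lift z hzπ ≫ n
    have h2 : hSPexact.lift z hzπ ≫ n = z ≫ q := by
      rw [hnq, ← Category.assoc, hck]
    rw [h2]
    show (π₂ ≫ π₁) ≫ x₂ = (π₂ ≫ y - b ≫ m) ≫ q
    simp only [Category.assoc]
    rw [Preadditive.sub_comp, Category.assoc, Category.assoc, hmq, comp_zero, sub_zero, hy]
  have hSQ : (ShortComplex.mk n t' hnt').ShortExact :=
    ShortComplex.ShortExact.mk' hSQexact inferInstance inferInstance
  -- a splitting of `j^* Q ⟶ j^* X` built from `ψ`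
  let isoP : R.jStar.obj P ≅ pullback (R.jStar.map p') (R.jStar.map p) :=
    PreservesPullback.iso R.jStar p' p
  let σ₀ : R.jStar.obj E ⟶ R.jStar.obj P :=
    pullback.lift ψ.hom (𝟙 _) (by rw [hψ₂, Category.id_comp]) ≫ isoP.inv
  have hσ₀π : σ₀ ≫ R.jStar.map π = 𝟙 _ := by
    show (pullback.lift ψ.hom (𝟙 _) _ ≫ isoP.inv) ≫ R.jStar.map (pullback.snd p' p) = 𝟙 _
    rw [Category.assoc, PreservesPullback.iso_inv_snd, pullback.lift_snd]
  have hσ₀π' : σ₀ ≫ R.jStar.map π' = ψ.hom := by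
    show (pullback.lift ψ.hom (𝟙 _) _ ≫ isoP.inv) ≫ R.jStar.map (pullback.fst p' p) = ψ.hom
    rw [Category.assoc, PreservesPullback.iso_inv_fst, pullback.lift_fst]
  have hiσ₀ : R.jStar.map i ≫ σ₀ = R.jStar.map m := by
    rw [← cancel_mono isoP.hom]
    apply pullback.hom_ext
    · simp only [Category.assoc]
      rw [PreservesPullback.iso_hom_fst]
      show R.jStar.map i ≫ σ₀ ≫ R.jStar.map (pullback.fst p' p) =
        R.jStar.map m ≫ R.jStar.map (pullback.fst p' p)
      rw [show (pullback.fst p' p : P ⟶ E') = π' from rfl, hσ₀π', hψ₁,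
        ← Functor.map_comp, hmπ']
    · simp only [Category.assoc]
      rw [PreservesPullback.iso_hom_snd]
      show R.jStar.map i ≫ σ₀ ≫ R.jStar.map (pullback.snd p' p) =
        R.jStar.map m ≫ R.jStar.map (pullback.snd p' p)
      rw [show (pullback.snd p' p : P ⟶ E) = π from rfl, hσ₀π, Category.comp_id,
        ← Functor.map_comp, hmπ]
  have hSE : ((ShortComplex.mk i p w).map R.jStar).ShortExact :=
    hE.map_of_exact R.jStar
  haveI := hSE.epi_g
  have hτ : ((ShortComplex.mk i p w).map R.jStar).f ≫ (σ₀ ≫ R.jStar.map q) = 0 := by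
    show R.jStar.map i ≫ σ₀ ≫ R.jStar.map q = 0
    rw [← Category.assoc, hiσ₀, ← Functor.map_comp, hmq, Functor.map_zero]
  let σ'' : R.jStar.obj X ⟶ R.jStar.obj Q := hSE.exact.desc (σ₀ ≫ R.jStar.map q) hτ
  have hσ'' : R.jStar.map p ≫ σ'' = σ₀ ≫ R.jStar.map q := hSE.exact.g_desc _ _
  have hsec : σ'' ≫ R.jStar.map t' = 𝟙 (R.jStar.obj X) := by
    have hEpi : Epi (R.jStar.map p) := hSE.epi_g
    rw [← cancel_epi (R.jStar.map p), ← Category.assoc, hσ'', Category.assoc,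
      ← Functor.map_comp, hqt', Functor.map_comp, ← Category.assoc, hσ₀π, Category.id_comp, Category.comp_id]
  -- transport the splitting to `A` using the counit of `j_! ⊣ j^*`
  let εX : R.jShriek.obj (R.jStar.obj X) ⟶ X := R.adj₁.counit.app X
  haveI hεX : Epi εX := epi_counit_app R hX
  let v : R.jShriek.obj (R.jStar.obj X) ⟶ Q := R.jShriek.map σ'' ≫ R.adj₁.counit.app Q
  have hvt : v ≫ t' = εX := by
    have hnat := R.adj₁.counit.naturality t'
    simp only [Functor.comp_map, Functor.id_map] at hnat
    show (R.jShriek.map σ'' ≫ R.adj₁.counit.app Q) ≫ t' = εX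
    rw [Category.assoc, ← hnat, ← Category.assoc, ← Functor.map_comp, hsec, CategoryTheory.Functor.map_id,
      Category.id_comp]
  -- `v` kills the kernel of `εX`
  have hκ : kernel.ι εX ≫ v = 0 := by
    have h0 : (kernel.ι εX ≫ v) ≫ t' = 0 := by
      rw [Category.assoc, hvt, kernel.condition]
    have hc : hSQexact.lift (kernel.ι εX ≫ v) h0 ≫ n = kernel.ι εX ≫ v :=
      hSQexact.lift_f _ _
    have hzero : hSQexact.lift (kernel.ι εX ≫ v) h0 = 0 :=
      hom_eq_zero_left R (isZero_jStar_kernel_counit R X) hB _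
    rw [← hc, hzero, zero_comp]
  -- descend `v` to a splitting `s : X ⟶ Q`
  have hKexact : (ShortComplex.mk (kernel.ι εX) εX (kernel.condition εX)).Exact :=
    CategoryTheory.ShortComplex.exact_kernel εX
  let s : X ⟶ Q := hKexact.desc v hκ
  have hs : εX ≫ s = v := hKexact.g_desc _ _
  have hst : s ≫ t' = 𝟙 X := by
    rw [← cancel_epi εX, ← Category.assoc, hs, hvt, Category.comp_id]
  -- the correction morphism
  let θ : P ⟶ Q := q - π ≫ p ≫ s
  have hθt : θ ≫ t' = 0 := by
    show (q - π ≫ p ≫ s) ≫ t' = 0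
    rw [Preadditive.sub_comp, hqt', Category.assoc, Category.assoc, hst, Category.comp_id, sub_self]
  let wmap : P ⟶ B := hSQexact.lift θ hθt
  have hw : wmap ≫ n = θ := hSQexact.lift_f _ _
  have hkw : k ≫ wmap = 𝟙 B := by
    rw [← cancel_mono n, Category.assoc, hw, Category.id_comp]
    show k ≫ (q - π ≫ p ≫ s) = n
    rw [Preadditive.comp_sub, ← Category.assoc, hkπ, zero_comp, sub_zero, hnq]
  have hmw : m ≫ wmap = 0 := by
    rw [← cancel_mono n, Category.assoc, hw, zero_comp]
    show m ≫ (q - π ≫ p ≫ s) = 0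
    rw [Preadditive.comp_sub, hmq, ← Category.assoc, hmπ, ← Category.assoc, w, zero_comp,
      sub_self]
  -- the comparison morphism `f : E ⟶ E'`
  let g : P ⟶ E' := π' - wmap ≫ i'
  have hkg : k ≫ g = 0 := by
    show k ≫ (π' - wmap ≫ i') = 0
    rw [Preadditive.comp_sub, hkπ', ← Category.assoc, hkw, Category.id_comp, sub_self]
  let f : E ⟶ E' := hSPexact.desc g hkg
  have hπf : π ≫ f = g := hSPexact.g_desc _ _
  have hfp : f ≫ p' = p := by
    rw [← cancel_epi π, ← Category.assoc, hπf]
    show (π' - wmap ≫ i') ≫ p' = π ≫ p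
    rw [Preadditive.sub_comp, hcond, Category.assoc, w', comp_zero, sub_zero]
  have hfi : i ≫ f = i' := by
    rw [← hmπ, Category.assoc, hπf]
    show m ≫ (π' - wmap ≫ i') = i'
    rw [Preadditive.comp_sub, hmπ', ← Category.assoc, hmw, zero_comp, sub_zero]
  -- `f` is an isomorphism by the five lemma
  let φc : ShortComplex.mk i p w ⟶ ShortComplex.mk i' p' w' :=
    { τ₁ := 𝟙 B
      τ₂ := f
      τ₃ := 𝟙 X
      comm₁₂ := by simpa using hfi.symm
      comm₂₃ := by simpa using hfp }
  haveI : IsIso φc.τ₁ := by show IsIso (𝟙 B); infer_instance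
  haveI : IsIso φc.τ₃ := by show IsIso (𝟙 X); infer_instance
  haveI : IsIso f := ShortComplex.isIso₂_of_shortExact_of_isIso₁₃ φc hE hE'
  exact ⟨asIso f, hfi, hfp⟩
end
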